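/- Let F_q be a finite field, let α_1,…,α_r be distinct elements of F_q, let y = (y_{j,i}) ∈ Mat_{s×r}(F_q), and let e, t be nonnegative integers with 2e + t − 1 < rs. Suppose the pairs of polynomials (E_1, N_1) and (E_2, N_2) over F_q satisfy deg E_k ≤ e and deg N_k ≤ e + t − 1, and ∂^(ℓ−1)N_k(α_i) = Σ_{j=1}^{ℓ} y_{j,i} · ∂^(ℓ−j)E_k(α_i) for all 1 ≤ i ≤ r, 1 ≤ ℓ ≤ s and k = 1, 2. Then N_1·E_2 = N_2·E_1; in particular, if E_1 and E_2 are nonzero, the rational functions N_1/E_1 and N_2/E_2 coincide. -/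

import Mathlib

open Polynomial

private lemma wb_bridge {F : Type*} [Field F] {s : ℕ} (f : Fin s → F) (d : ℕ) (hd : d < s) :
    ∑ j ∈ Finset.Iic (⟨d, hd⟩ : Fin s), f j =
      ∑ k ∈ Finset.range (d+1),
        f ⟨min k d, lt_of_le_of_lt (min_le_right _ _) hd⟩ := by
  refine Finset.sum_nbij' (fun j => j.val)
    (fun k => (⟨min k d, lt_of_le_of_lt (min_le_right _ _) hd⟩ : Fin s)) ?_ ?_ ?_ ?_ ?_
  · intro a ha
    simp only [Finset.mem_Iic, Fin.le_def] at ha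
    simp [Nat.lt_succ_iff, ha]
  · intro k hk
    simp [Finset.mem_Iic, Fin.le_def]
  · intro a ha
    simp only [Finset.mem_Iic, Fin.le_def] at ha
    exact Fin.ext (by simp [Nat.min_eq_left ha])
  · intro k hk
    simp only [Finset.mem_range, Nat.lt_succ_iff] at hk
    simp [Nat.min_eq_left hk]
  · intro a ha
    simp only [Finset.mem_Iic, Fin.le_def] at ha
    exact congrArg f (Fin.ext (Nat.min_eq_left ha)).symm

/-- **uniqueness of the Welch–Berlekamp ratio.** Let `α 1, …, α r` be distinct,
`y ∈ Mat_{s×r}(F_q)`, and `e, t` with `2e + t - 1 < r*s` (i.e. `2e + t ≤ r*s`).  If the pairs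
`(E₁, N₁)` and `(E₂, N₂)` satisfy `deg E_k ≤ e`, `deg N_k ≤ e + t - 1` (i.e.
`deg N_k < e + t`) and the Welch–Berlekamp key equations, then `N₁ * E₂ = N₂ * E₁`; in
particular when `E₁, E₂ ≠ 0`, the rational functions `N₁ / E₁` and `N₂ / E₂` coincide. -/
theorem welchBerlekamp_ratio_unique {F : Type*} [Field F] [Fintype F] {s r : ℕ}
    (α : Fin r → F) (hα : Function.Injective α)
    (y : Matrix (Fin s) (Fin r) F) (e t : ℕ) (het : 2 * e + t ≤ r * s)
    (E₁ N₁ E₂ N₂ : Polynomial F)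
    (hE₁ : E₁.degree ≤ (e : ℕ)) (hE₂ : E₂.degree ≤ (e : ℕ))
    (hN₁ : N₁.degree < ((e + t : ℕ) : WithBot ℕ))
    (hN₂ : N₂.degree < ((e + t : ℕ) : WithBot ℕ))
    (h1 : ∀ (i : Fin r) (ℓ : Fin s),
      (Polynomial.hasseDeriv ℓ.val N₁).eval (α i) =
        ∑ j ∈ Finset.Iic ℓ,
          y j i * (Polynomial.hasseDeriv (ℓ.val - j.val) E₁).eval (α i))
    (h2 : ∀ (i : Fin r) (ℓ : Fin s),
      (Polynomial.hasseDeriv ℓ.val N₂).eval (α i) =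
        ∑ j ∈ Finset.Iic ℓ,
          y j i * (Polynomial.hasseDeriv (ℓ.val - j.val) E₂).eval (α i)) :
    N₁ * E₂ = N₂ * E₁ ∧
      (E₁ ≠ 0 → E₂ ≠ 0 →
        (algebraMap (Polynomial F) (RatFunc F) N₁) /
            (algebraMap (Polynomial F) (RatFunc F) E₁) =
          (algebraMap (Polynomial F) (RatFunc F) N₂) /
            (algebraMap (Polynomial F) (RatFunc F) E₂)) := by
  have main : N₁ * E₂ = N₂ * E₁ := by
    by_contra hP0
    set P : Polynomial F := N₁ * E₂ - N₂ * E₁ with hPdef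
    have hPne : P ≠ 0 := sub_ne_zero.mpr hP0
    -- each (X - α i)^s divides P
    have key : ∀ i : Fin r, (X - C (α i)) ^ s ∣ P := by
      intro i
      set a : F := α i with ha
      set Yp : Polynomial F := ∑ j : Fin s, C (y j i) * X ^ (j : ℕ) with hYp
      have hYcoeff : ∀ (d : ℕ) (hd : d < s), Yp.coeff d = y ⟨d, hd⟩ i := by
        intro d hd
        rw [hYp, finset_sum_coeff]
        rw [Finset.sum_eq_single (⟨d, hd⟩ : Fin s)]
        · simp
        · intro b _ hb
          have : d ≠ (b : ℕ) := fun h => hb (by exact (Fin.ext h.symm))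
          simp [coeff_C_mul, coeff_X_pow, this]
        · simp
      have hdvd : ∀ (N E : Polynomial F),
          (∀ ℓ : Fin s, (hasseDeriv ℓ.val N).eval a =
            ∑ j ∈ Finset.Iic ℓ, y j i * (hasseDeriv (ℓ.val - j.val) E).eval a) →
          X ^ s ∣ (taylor a N - Yp * taylor a E) := by
        intro N E h
        rw [X_pow_dvd_iff]
        intro d hd
        rw [coeff_sub, sub_eq_zero, taylor_coeff, coeff_mul,
          Finset.Nat.sum_antidiagonal_eq_sum_range_succ_mk]
        rw [h ⟨d, hd⟩, wb_bridge (fun j => y j i * (hasseDeriv (d - j.val) E).eval a) d hd]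
        refine Finset.sum_congr rfl ?_
        intro k hk
        simp only [Finset.mem_range, Nat.lt_succ_iff] at hk
        simp only [Nat.min_eq_left hk]
        rw [hYcoeff k (by omega), taylor_coeff]
      have d1 : X ^ s ∣ (taylor a N₁ - Yp * taylor a E₁) := hdvd N₁ E₁ (h1 i)
      have d2 : X ^ s ∣ (taylor a N₂ - Yp * taylor a E₂) := hdvd N₂ E₂ (h2 i)
      have dP : X ^ s ∣ taylor a P := by
        have : taylor a P = (taylor a N₁ - Yp * taylor a E₁) * taylor a E₂ -
            (taylor a N₂ - Yp * taylor a E₂) * taylor a E₁ := by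
          rw [hPdef, map_sub, taylor_mul, taylor_mul]; ring
        rw [this]
        exact dvd_sub (Dvd.dvd.mul_right d1 _) (Dvd.dvd.mul_right d2 _)
      obtain ⟨Q, hQ⟩ := dP
      refine ⟨taylor (-a) Q, ?_⟩
      have := congrArg (taylor (-a)) hQ
      rw [taylor_taylor, neg_add_cancel] at this
      simpa [taylor_apply, mul_comp, pow_comp, sub_eq_add_neg] using this
    have hcop : ((Finset.univ : Finset (Fin r)) : Set (Fin r)).Pairwise
        (Function.onFun IsCoprime fun i => (X - C (α i)) ^ s) := by
      intro i _ j _ hij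
      exact (pairwise_coprime_X_sub_C hα hij).pow
    have hprod : (∏ i : Fin r, (X - C (α i)) ^ s) ∣ P :=
      Finset.prod_dvd_of_coprime hcop fun i _ => key i
    have hdegprod : (∏ i : Fin r, (X - C (α i)) ^ s).degree = ((r * s : ℕ) : WithBot ℕ) := by
      rw [degree_prod]
      simp [degree_pow, degree_X_sub_C, Finset.sum_const, Finset.card_univ, mul_comm]
    have hle := Polynomial.degree_le_of_dvd hprod hPne
    have hmul : ∀ (N E : Polynomial F), N.degree < ((e + t : ℕ) : WithBot ℕ) →
        E.degree ≤ (e : ℕ) → (N * E).degree < ((r * s : ℕ) : WithBot ℕ) := by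
      intro N E hN hE
      rcases eq_or_ne N 0 with h | hN0
      · rw [h, zero_mul, degree_zero]
        exact WithBot.bot_lt_coe _
      rcases eq_or_ne E 0 with h | hE0
      · rw [h, mul_zero, degree_zero]
        exact WithBot.bot_lt_coe _
      rw [degree_mul, degree_eq_natDegree hN0, degree_eq_natDegree hE0]
      rw [degree_eq_natDegree hN0] at hN
      rw [degree_eq_natDegree hE0] at hE
      rw [← Nat.cast_add, Nat.cast_lt]
      have h1 : N.natDegree < e + t := by exact_mod_cast hN
      have h2 : E.natDegree ≤ e := by exact_mod_cast hE
      omega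
    have hlt : P.degree < ((r * s : ℕ) : WithBot ℕ) := by
      apply lt_of_le_of_lt (degree_sub_le _ _)
      exact max_lt (hmul N₁ E₂ hN₁ hE₂) (hmul N₂ E₁ hN₂ hE₁)
    rw [hdegprod] at hle
    exact absurd hle (not_le.mpr hlt)
  refine ⟨main, ?_⟩
  intro hE1 hE2
  rw [div_eq_div_iff (RatFunc.algebraMap_ne_zero hE1) (RatFunc.algebraMap_ne_zero hE2),
    ← map_mul, ← map_mul, main]
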